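/- Let H be a real Hilbert space, f, g : H → ℝ ∪ {+∞} proper closed convex functions with dom f ∩ dom g ≠ ∅, and S_f, S_g affine support sets of f and g respectively. If f(x) ≥ 0 for every x with g(x) ≤ 0, then either 0 ∈ cl conv(S_f ∪ S_g), or the minimizer (a*, v*) of ‖(a, v)‖² over cl conv(S_f ∪ S_g) satisfies a* > 0. -/

import Mathlib

lemma aux_small_t (c K : ℝ) (h : ∀ t : ℝ, 0 < t → t ≤ 1 → c ≤ t * K) : c ≤ 0 := by
  by_contra hc
  push_neg at hc
  rcases le_or_gt K 0 with hK | hK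
  · have := h 1 one_pos le_rfl
    nlinarith
  · have ht0 : 0 < min 1 (c / (2 * K)) := lt_min one_pos (by positivity)
    have := h _ ht0 (min_le_left _ _)
    have h2 : min 1 (c / (2 * K)) * K ≤ (c / (2 * K)) * K :=
      mul_le_mul_of_nonneg_right (min_le_right _ _) hK.le
    have h3 : (c / (2 * K)) * K = c / 2 := by field_simp
    nlinarith

/-- if f ≥ 0 on { g ≤ 0 }, then either 0 ∈ cl conv(S_f ∪ S_g), or the
minimal-norm element of cl conv(S_f ∪ S_g) has positive first component. -/
theorem nonneg_on_sublevel_imp_zero_mem_or_pos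
    {H : Type*} [NormedAddCommGroup H] [InnerProductSpace ℝ H] [CompleteSpace H]
    (f g : H → EReal) (Sf Sg : Set (ℝ × H))
    (hfproper_top : ∃ x, f x ≠ ⊤) (hfproper_bot : ∀ x, f x ≠ ⊥)
    (hgproper_top : ∃ x, g x ≠ ⊤) (hgproper_bot : ∀ x, g x ≠ ⊥)
    (hflsc : LowerSemicontinuous f) (hglsc : LowerSemicontinuous g)
    (hfconv : Convex ℝ {p : H × ℝ | f p.1 ≤ (p.2 : EReal)})
    (hgconv : Convex ℝ {p : H × ℝ | g p.1 ≤ (p.2 : EReal)})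
    (hSfclosed : IsClosed Sf) (hSfconv : Convex ℝ Sf)
    (hSgclosed : IsClosed Sg) (hSgconv : Convex ℝ Sg)
    (hfrep : ∀ x, f x = ⨆ p ∈ Sf, ((p.1 + inner ℝ p.2 x : ℝ) : EReal))
    (hgrep : ∀ x, g x = ⨆ p ∈ Sg, ((p.1 + inner ℝ p.2 x : ℝ) : EReal))
    (hdom : ∃ x, f x ≠ ⊤ ∧ g x ≠ ⊤)
    (pstar : ℝ × H) (hpmem : pstar ∈ closure (convexHull ℝ (Sf ∪ Sg)))
    (hpmin : ∀ q ∈ closure (convexHull ℝ (Sf ∪ Sg)),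
      pstar.1 ^ 2 + ‖pstar.2‖ ^ 2 ≤ q.1 ^ 2 + ‖q.2‖ ^ 2)
    (hfnonneg : ∀ x, g x ≤ 0 → (0 : EReal) ≤ f x) :
    (0 : ℝ × H) ∈ closure (convexHull ℝ (Sf ∪ Sg)) ∨ 0 < pstar.1 := by
  by_contra hcon
  push_neg at hcon
  obtain ⟨h0, ha⟩ := hcon
  set C := closure (convexHull ℝ (Sf ∪ Sg)) with hC
  have hCconv : Convex ℝ C := (convex_convexHull ℝ _).closure
  set m : ℝ := pstar.1 ^ 2 + ‖pstar.2‖ ^ 2 with hm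
  have hm0 : 0 < m := by
    rcases lt_or_eq_of_le (by positivity : (0:ℝ) ≤ m) with h | h
    · exact h
    · exfalso
      have h1 : pstar.1 = 0 := by nlinarith [sq_nonneg pstar.1, norm_nonneg pstar.2]
      have h2 : ‖pstar.2‖ = 0 := by nlinarith [sq_nonneg pstar.1, norm_nonneg pstar.2]
      have : pstar = 0 := Prod.ext h1 (norm_eq_zero.mp h2)
      exact h0 (this ▸ hpmem)
  -- key variational inequality
  have hkey : ∀ q ∈ C, m ≤ pstar.1 * q.1 + inner ℝ pstar.2 q.2 := by
    intro q hq
    set I : ℝ := inner ℝ pstar.2 q.2 with hI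
    have hstep : ∀ t : ℝ, 0 < t → t ≤ 1 →
        m - (pstar.1 * q.1 + I) ≤
          t * ((pstar.1^2 + q.1^2 + ‖pstar.2‖^2 + ‖q.2‖^2 - 2*pstar.1*q.1 - 2*I)/2) := by
      intro t ht0 ht1
      have hmem : (1 - t) • pstar + t • q ∈ C :=
        hCconv hpmem hq (by linarith) ht0.le (by ring)
      have h2 := hpmin _ hmem
      have e1 : ((1 - t) • pstar + t • q).1 = (1-t)*pstar.1 + t*q.1 := rfl
      have e2 : ((1 - t) • pstar + t • q).2 = (1-t) • pstar.2 + t • q.2 := rfl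
      rw [e1, e2] at h2
      have e3 : ‖(1-t) • pstar.2 + t • q.2‖^2
          = (1-t)^2*‖pstar.2‖^2 + 2*((1-t)*t*I) + t^2*‖q.2‖^2 := by
        rw [norm_add_sq_real, real_inner_smul_left, real_inner_smul_right,
          norm_smul, norm_smul, Real.norm_eq_abs, Real.norm_eq_abs,
          abs_of_nonneg (by linarith : (0:ℝ) ≤ 1 - t), abs_of_nonneg ht0.le, ← hI]
        ring
      rw [e3] at h2
      nlinarith [h2]
    have := aux_small_t _ _ hstep
    linarith
  have hmemS : ∀ p ∈ Sf ∪ Sg, m ≤ pstar.1 * p.1 + inner ℝ pstar.2 p.2 := fun p hp =>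
    hkey p (subset_closure (subset_convexHull ℝ _ hp))
  rcases ha.lt_or_eq with hA | hA
  · -- pstar.1 < 0
    set x := (pstar.1)⁻¹ • pstar.2 with hx
    have hfb : ∀ p ∈ Sf ∪ Sg, p.1 + inner ℝ p.2 x ≤ m / pstar.1 := by
      intro p hp
      have h1 := hmemS p hp
      have h2 : (inner ℝ p.2 x : ℝ) = (pstar.1)⁻¹ * inner ℝ pstar.2 p.2 := by
        rw [hx, real_inner_smul_right, real_inner_comm]
      rw [h2, le_div_iff_of_neg hA]
      have hne : pstar.1 ≠ 0 := hA.ne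
      have h3 : (p.1 + (pstar.1)⁻¹ * inner ℝ pstar.2 p.2) * pstar.1
          = pstar.1 * p.1 + inner ℝ pstar.2 p.2 := by field_simp
      linarith [h3 ▸ h1]
    have hfx : f x ≤ ((m / pstar.1 : ℝ) : EReal) := by
      rw [hfrep]
      exact iSup₂_le fun p hp => EReal.coe_le_coe_iff.mpr (hfb p (Or.inl hp))
    have hgx : g x ≤ ((m / pstar.1 : ℝ) : EReal) := by
      rw [hgrep]
      exact iSup₂_le fun p hp => EReal.coe_le_coe_iff.mpr (hfb p (Or.inr hp))
    have hneg : m / pstar.1 < 0 := div_neg_of_pos_of_neg hm0 hA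
    have hg0 : g x ≤ 0 := hgx.trans (by exact_mod_cast hneg.le)
    have := (hfnonneg x hg0).trans hfx
    have : (0:ℝ) ≤ m / pstar.1 := by exact_mod_cast this
    linarith
  · -- pstar.1 = 0
    obtain ⟨x0, hfx0, hgx0⟩ := hdom
    set rf : ℝ := (f x0).toReal with hrf
    set rg : ℝ := (g x0).toReal with hrg
    have hfr : f x0 = (rf : EReal) := (EReal.coe_toReal hfx0 (hfproper_bot x0)).symm
    have hgr : g x0 = (rg : EReal) := (EReal.coe_toReal hgx0 (hgproper_bot x0)).symm
    have hfb0 : ∀ p ∈ Sf, p.1 + inner ℝ p.2 x0 ≤ rf := by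
      intro p hp
      have : ((p.1 + inner ℝ p.2 x0 : ℝ) : EReal) ≤ f x0 := by
        rw [hfrep]
        exact le_iSup₂ (f := fun (p : ℝ × H) (_ : p ∈ Sf) =>
          ((p.1 + inner ℝ p.2 x0 : ℝ) : EReal)) p hp
      rw [hfr] at this
      exact_mod_cast this
    have hgb0 : ∀ p ∈ Sg, p.1 + inner ℝ p.2 x0 ≤ rg := by
      intro p hp
      have : ((p.1 + inner ℝ p.2 x0 : ℝ) : EReal) ≤ g x0 := by
        rw [hgrep]
        exact le_iSup₂ (f := fun (p : ℝ × H) (_ : p ∈ Sg) =>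
          ((p.1 + inner ℝ p.2 x0 : ℝ) : EReal)) p hp
      rw [hgr] at this
      exact_mod_cast this
    set t : ℝ := (|rf| + |rg| + 1) / m with ht
    have ht0 : 0 < t := by positivity
    have htm : t * m = |rf| + |rg| + 1 := by
      rw [ht]; field_simp
    set x := x0 - t • pstar.2 with hx
    have hinner : ∀ p : ℝ × H, (inner ℝ p.2 x : ℝ)
        = inner ℝ p.2 x0 - t * inner ℝ pstar.2 p.2 := by
      intro p
      rw [hx, inner_sub_right, real_inner_smul_right, real_inner_comm p.2]
    have hb : ∀ p ∈ Sf ∪ Sg, p.1 + inner ℝ p.2 x ≤ max rf rg - (|rf| + |rg| + 1) := by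
      intro p hp
      have h1 := hmemS p hp
      rw [hA, zero_mul, zero_add] at h1
      have h2 : t * m ≤ t * inner ℝ pstar.2 p.2 := mul_le_mul_of_nonneg_left h1 ht0.le
      rw [htm] at h2
      rw [hinner p]
      rcases hp with h | h
      · have := hfb0 p h
        have := le_max_left rf rg
        linarith
      · have := hgb0 p h
        have := le_max_right rf rg
        linarith
    have hb1 : ∀ p ∈ Sf ∪ Sg, p.1 + inner ℝ p.2 x ≤ (-1 : ℝ) := by
      intro p hp
      have h4 := hb p hp
      have h5 := le_abs_self rf
      have h6 := le_abs_self rg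
      have h7 : max rf rg ≤ |rf| + |rg| := by
        rcases max_cases rf rg with ⟨he, _⟩ | ⟨he, _⟩ <;> rw [he] <;>
          [linarith [abs_nonneg rg]; linarith [abs_nonneg rf]]
      linarith
    have hbf : ∀ p ∈ Sf, p.1 + inner ℝ p.2 x ≤ (-1 : ℝ) := fun p hp => hb1 p (Or.inl hp)
    have hbg : ∀ p ∈ Sg, p.1 + inner ℝ p.2 x ≤ (-1 : ℝ) := fun p hp => hb1 p (Or.inr hp)
    have hfx : f x ≤ ((-1 : ℝ) : EReal) := by
      rw [hfrep]
      exact iSup₂_le fun p hp => EReal.coe_le_coe_iff.mpr (hbf p hp)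
    have hgx : g x ≤ ((-1 : ℝ) : EReal) := by
      rw [hgrep]
      exact iSup₂_le fun p hp => EReal.coe_le_coe_iff.mpr (hbg p hp)
    have hg0 : g x ≤ 0 := hgx.trans (by exact_mod_cast (by norm_num : (-1:ℝ) ≤ 0))
    have := (hfnonneg x hg0).trans hfx
    have : (0:ℝ) ≤ -1 := by exact_mod_cast this
    linarith
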